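/- For all t > 0, s > 0 and all x, y ∈ ℝ², the Mehler kernel satisfies the Chapman–Kolmogorov (semigroup) identity ∫_{ℝ²} K(t,x,z) K(s,z,y) dz = K(t+s, x, y), the integral being absolutely convergent. -/

import Mathlib

open MeasureTheory Real Set

private lemma key_poly (j A B G D X1 X2 Y1 Y2 : ℂ) (hj : j ^ 2 = -1)
    (hR : 4 * (A * B) + G ^ 2 = 4 * (A + B) * D) :
    4 * (A + B) * ((-(A * X1 ^ 2) - B * Y1 ^ 2) + (-(A * X2 ^ 2) - B * Y2 ^ 2)) +
      ((2 * A * X1 + 2 * B * Y1 + j * G * (X2 - Y2)) ^ 2 +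
        (2 * A * X2 + 2 * B * Y2 - j * G * (X1 - Y1)) ^ 2) =
    4 * (A + B) * (-(D * ((X1 - Y1) ^ 2 + (X2 - Y2) ^ 2)) - j * G * (X1 * Y2 - X2 * Y1)) := by
  linear_combination (G ^ 2 * ((X1 - Y1) ^ 2 + (X2 - Y2) ^ 2)) * hj -
    ((X1 - Y1) ^ 2 + (X2 - Y2) ^ 2) * hR

private lemma key_div (A B G D X1 X2 Y1 Y2 : ℂ) (hAB : A + B ≠ 0)
    (hR : 4 * (A * B) + G ^ 2 = 4 * (A + B) * D) :
    (-(A * X1 ^ 2) - B * Y1 ^ 2) -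
        (2 * A * X1 + 2 * B * Y1 + Complex.I * G * (X2 - Y2)) ^ 2 / (4 * -(A + B)) +
      ((-(A * X2 ^ 2) - B * Y2 ^ 2) -
        (2 * A * X2 + 2 * B * Y2 - Complex.I * G * (X1 - Y1)) ^ 2 / (4 * -(A + B))) =
    -(D * ((X1 - Y1) ^ 2 + (X2 - Y2) ^ 2)) - Complex.I * G * (X1 * Y2 - X2 * Y1) := by
  have hkey := key_poly Complex.I A B G D X1 X2 Y1 Y2 Complex.I_sq hR
  have hE : (A + B) * (A + B)⁻¹ = 1 := mul_inv_cancel₀ hAB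
  have hdiv : ∀ c : ℂ, c / (4 * -(A + B)) = -(c * (A + B)⁻¹) / 4 := fun c => by
    rw [mul_neg, div_neg, ← div_div, div_eq_mul_inv (c / 4)]; ring
  simp only [hdiv]
  linear_combination ((A + B)⁻¹ / 4) * hkey +
    (-(D * ((X1 - Y1) ^ 2 + (X2 - Y2) ^ 2)) - Complex.I * G * (X1 * Y2 - X2 * Y1) -
      ((-(A * X1 ^ 2) - B * Y1 ^ 2) + (-(A * X2 ^ 2) - B * Y2 ^ 2))) * hE

private lemma mehler_hP (B₀ t s : ℝ) (hB : 0 < B₀) (ht : 0 < t) (hs : 0 < s) :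
    (B₀ / (4 * Real.pi * Real.sinh (B₀ * t))) * (B₀ / (4 * Real.pi * Real.sinh (B₀ * s))) *
      (Real.pi / (B₀ / (4 * Real.tanh (B₀ * t)) + B₀ / (4 * Real.tanh (B₀ * s)))) =
    B₀ / (4 * Real.pi * Real.sinh (B₀ * (t + s))) := by
  have h1 : (0:ℝ) < Real.sinh (B₀ * t) := Real.sinh_pos_iff.mpr (by positivity)
  have h2 : (0:ℝ) < Real.sinh (B₀ * s) := Real.sinh_pos_iff.mpr (by positivity)
  have h3 : (0:ℝ) < Real.cosh (B₀ * t) := Real.cosh_pos _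
  have h4 : (0:ℝ) < Real.cosh (B₀ * s) := Real.cosh_pos _
  rw [show B₀ * (t + s) = B₀ * t + B₀ * s by ring, Real.sinh_add,
    Real.tanh_eq_sinh_div_cosh, Real.tanh_eq_sinh_div_cosh]
  have h5 : (0:ℝ) < Real.sinh (B₀*t) * Real.cosh (B₀*s) + Real.cosh (B₀*t) * Real.sinh (B₀*s) := by
    positivity
  field_simp
  ring

private lemma mehler_hR (B₀ t s : ℝ) (hB : 0 < B₀) (ht : 0 < t) (hs : 0 < s) :
    4 * ((B₀ / (4 * Real.tanh (B₀ * t))) * (B₀ / (4 * Real.tanh (B₀ * s)))) + (B₀ / 2) ^ 2 =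
    4 * (B₀ / (4 * Real.tanh (B₀ * t)) + B₀ / (4 * Real.tanh (B₀ * s))) *
      (B₀ / (4 * Real.tanh (B₀ * (t + s)))) := by
  have h1 : (0:ℝ) < Real.sinh (B₀ * t) := Real.sinh_pos_iff.mpr (by positivity)
  have h2 : (0:ℝ) < Real.sinh (B₀ * s) := Real.sinh_pos_iff.mpr (by positivity)
  have h3 : (0:ℝ) < Real.cosh (B₀ * t) := Real.cosh_pos _
  have h4 : (0:ℝ) < Real.cosh (B₀ * s) := Real.cosh_pos _
  rw [show B₀ * (t + s) = B₀ * t + B₀ * s by ring, Real.tanh_eq_sinh_div_cosh,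
    Real.tanh_eq_sinh_div_cosh, Real.tanh_eq_sinh_div_cosh, Real.sinh_add, Real.cosh_add]
  have h5 : (0:ℝ) < Real.sinh (B₀*t) * Real.cosh (B₀*s) + Real.cosh (B₀*t) * Real.sinh (B₀*s) := by
    positivity
  field_simp
  ring

noncomputable def mehlerK (B₀ t : ℝ) (x y : ℝ × ℝ) : ℂ :=
  ((B₀ / (4 * Real.pi * Real.sinh (B₀ * t)) : ℝ) : ℂ) *
    Complex.exp
      (-(((B₀ * ((x.1 - y.1) ^ 2 + (x.2 - y.2) ^ 2) / (4 * Real.tanh (B₀ * t))) : ℝ) : ℂ)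
        - Complex.I * ((B₀ / 2 : ℝ) : ℂ) * (((x.1 * y.2 - x.2 * y.1) : ℝ) : ℂ))

theorem mehlerK_chapman_kolmogorov (B₀ : ℝ) (hB : 0 < B₀) (t s : ℝ) (ht : 0 < t) (hs : 0 < s)
    (x y : ℝ × ℝ) :
    Integrable (fun z : ℝ × ℝ => mehlerK B₀ t x z * mehlerK B₀ s z y) volume ∧
    ∫ z : ℝ × ℝ, mehlerK B₀ t x z * mehlerK B₀ s z y = mehlerK B₀ (t + s) x y := by
  have h1 : (0:ℝ) < Real.sinh (B₀ * t) := Real.sinh_pos_iff.mpr (by positivity)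
  have h2 : (0:ℝ) < Real.sinh (B₀ * s) := Real.sinh_pos_iff.mpr (by positivity)
  have h3 : (0:ℝ) < Real.cosh (B₀ * t) := Real.cosh_pos _
  have h4 : (0:ℝ) < Real.cosh (B₀ * s) := Real.cosh_pos _
  have hT : (0:ℝ) < Real.tanh (B₀ * t) := by
    rw [Real.tanh_eq_sinh_div_cosh]; positivity
  have hS : (0:ℝ) < Real.tanh (B₀ * s) := by
    rw [Real.tanh_eq_sinh_div_cosh]; positivity
  set α : ℝ := B₀ / (4 * Real.tanh (B₀ * t)) with hαdef
  set β : ℝ := B₀ / (4 * Real.tanh (B₀ * s)) with hβdef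
  have hα : 0 < α := by rw [hαdef]; positivity
  have hβ : 0 < β := by rw [hβdef]; positivity
  -- complex data
  set q : ℂ := -((α + β : ℝ) : ℂ) with hqdef
  have hq : q.re < 0 := by
    simp only [hqdef, Complex.neg_re, Complex.ofReal_re]
    linarith
  set X1 : ℂ := (x.1 : ℂ) with hX1
  set X2 : ℂ := (x.2 : ℂ) with hX2
  set Y1 : ℂ := (y.1 : ℂ) with hY1
  set Y2 : ℂ := (y.2 : ℂ) with hY2
  set A : ℂ := ((α : ℝ) : ℂ) with hA
  set Bc : ℂ := ((β : ℝ) : ℂ) with hBc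
  set G : ℂ := ((B₀ / 2 : ℝ) : ℂ) with hG
  set c1 : ℂ := 2 * A * X1 + 2 * Bc * Y1 + Complex.I * G * (X2 - Y2) with hc1
  set c2 : ℂ := 2 * A * X2 + 2 * Bc * Y2 - Complex.I * G * (X1 - Y1) with hc2
  set d1 : ℂ := -(A * X1 ^ 2) - Bc * Y1 ^ 2 with hd1
  set d2 : ℂ := -(A * X2 ^ 2) - Bc * Y2 ^ 2 with hd2
  set f : ℝ → ℂ := fun u => Complex.exp (q * u ^ 2 + c1 * u + d1) with hf
  set g : ℝ → ℂ := fun u => Complex.exp (q * u ^ 2 + c2 * u + d2) with hg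
  set C : ℂ := ((B₀ / (4 * π * Real.sinh (B₀ * t)) : ℝ) : ℂ) *
      ((B₀ / (4 * π * Real.sinh (B₀ * s)) : ℝ) : ℂ) with hC
  have hTne : (Real.tanh (B₀ * t) : ℂ) ≠ 0 := by
    exact_mod_cast ne_of_gt hT
  have hSne : (Real.tanh (B₀ * s) : ℂ) ≠ 0 := by
    exact_mod_cast ne_of_gt hS
  have hpt : (fun z : ℝ × ℝ => mehlerK B₀ t x z * mehlerK B₀ s z y)
      = fun z : ℝ × ℝ => C * (f z.1 * g z.2) := by
    funext z
    simp only [mehlerK, hf, hg, hC]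
    rw [mul_mul_mul_comm, ← Complex.exp_add, ← Complex.exp_add]
    congr 1
    simp only [hc1, hc2, hd1, hd2, hqdef, hA, hBc, hG, hαdef, hβdef, hX1, hX2, hY1, hY2]
    push_cast
    push_cast at hTne hSne
    field_simp
    ring
  have hfint : Integrable f := integrable_cexp_quadratic' hq c1 d1
  have hgint : Integrable g := integrable_cexp_quadratic' hq c2 d2
  have hfg : Integrable (fun z : ℝ × ℝ => f z.1 * g z.2) volume := by
    rw [Measure.volume_eq_prod]; exact hfint.mul_prod hgint
  have hint : Integrable (fun z : ℝ × ℝ => mehlerK B₀ t x z * mehlerK B₀ s z y) volume := by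
    rw [hpt]; exact hfg.const_mul C
  refine ⟨hint, ?_⟩
  rw [hpt, integral_const_mul, Measure.volume_eq_prod, integral_prod_mul,
    integral_cexp_quadratic hq c1 d1, integral_cexp_quadratic hq c2 d2]
  -- square root product
  have hnegq : -q = ((α + β : ℝ) : ℂ) := by rw [hqdef]; ring
  have hne : ((π : ℂ) / -q) ≠ 0 := by
    rw [hnegq]
    exact div_ne_zero (by exact_mod_cast Real.pi_ne_zero)
      (by exact_mod_cast ne_of_gt (add_pos hα hβ))
  have hsq : ((π : ℂ) / -q) ^ (1 / 2 : ℂ) * ((π : ℂ) / -q) ^ (1 / 2 : ℂ) = (π : ℂ) / -q := by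
    rw [← Complex.cpow_add _ _ hne]
    norm_num
  rw [show ((π : ℂ) / -q) ^ (1 / 2 : ℂ) * Complex.exp (d1 - c1 ^ 2 / (4 * q)) *
      (((π : ℂ) / -q) ^ (1 / 2 : ℂ) * Complex.exp (d2 - c2 ^ 2 / (4 * q)))
      = (((π : ℂ) / -q) ^ (1 / 2 : ℂ) * ((π : ℂ) / -q) ^ (1 / 2 : ℂ)) *
        (Complex.exp (d1 - c1 ^ 2 / (4 * q)) * Complex.exp (d2 - c2 ^ 2 / (4 * q))) by ring,
    hsq, ← Complex.exp_add]
  -- constants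
  have hP : (B₀ / (4 * π * Real.sinh (B₀ * t))) * (B₀ / (4 * π * Real.sinh (B₀ * s))) *
      (π / (α + β)) = B₀ / (4 * π * Real.sinh (B₀ * (t + s))) := by
    rw [hαdef, hβdef]; exact mehler_hP B₀ t s hB ht hs
  have hconst : C * ((π : ℂ) / -q) = ((B₀ / (4 * π * Real.sinh (B₀ * (t + s))) : ℝ) : ℂ) := by
    rw [hnegq, hC, ← hP]
    push_cast
    ring
  -- exponent
  have hRr : 4 * (α * β) + (B₀ / 2) ^ 2 = 4 * (α + β) * (B₀ / (4 * Real.tanh (B₀ * (t + s)))) := by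
    rw [hαdef, hβdef]; exact mehler_hR B₀ t s hB ht hs
  set D : ℂ := ((B₀ / (4 * Real.tanh (B₀ * (t + s))) : ℝ) : ℂ) with hD
  have hRC : 4 * (A * Bc) + G ^ 2 = 4 * (A + Bc) * D := by
    rw [hA, hBc, hG, hD]
    exact_mod_cast hRr
  have hABne : (A + Bc) ≠ 0 := by
    rw [hA, hBc]
    exact_mod_cast ne_of_gt (add_pos hα hβ)
  have hqe : q = -(A + Bc) := by rw [hqdef, hA, hBc]; push_cast; ring
  have hexp : (d1 - c1 ^ 2 / (4 * q)) + (d2 - c2 ^ 2 / (4 * q))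
      = -(D * ((X1 - Y1) ^ 2 + (X2 - Y2) ^ 2)) - Complex.I * G * (X1 * Y2 - X2 * Y1) := by
    rw [hc1, hc2, hd1, hd2, hqe]
    exact key_div A Bc G D X1 X2 Y1 Y2 hABne hRC
  rw [hexp, ← mul_assoc, hconst]
  simp only [mehlerK]
  congr 1
  rw [hD, hG, hX1, hX2, hY1, hY2]
  push_cast
  ring
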